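/- Let π be a projective plane of prime order p with point set P, and let C_p(π) ⊆ F_p^P be the span of the indicator functions of lines. A word w ∈ F_p^P belongs to C_p(π) if and only if ⟨w, ℓ⟩ = ⟨w, 1⟩ for every line ℓ of π, where 1 is the all-ones vector. -/

import Mathlib

/-- A projective plane of order `p` on a finite point type `P`, with set of lines `L`:
`p² + p + 1` points, each line has `p + 1` points, each point lies on `p + 1` lines, any
two distinct points lie on a unique line, and any two distinct lines meet in a unique
point. -/
def IsProjPlane {P : Type} [Fintype P] [DecidableEq P] (p : ℕ) (L : Finset (Finset P)) :
    Prop :=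
  Fintype.card P = p ^ 2 + p + 1 ∧ (∀ ℓ ∈ L, ℓ.card = p + 1) ∧
    (∀ x : P, (L.filter (fun ℓ => x ∈ ℓ)).card = p + 1) ∧
    (∀ x y : P, x ≠ y → ∃! ℓ, ℓ ∈ L ∧ x ∈ ℓ ∧ y ∈ ℓ) ∧
    (∀ ℓ₁ ∈ L, ∀ ℓ₂ ∈ L, ℓ₁ ≠ ℓ₂ → ∃! x : P, x ∈ ℓ₁ ∧ x ∈ ℓ₂)

namespace ProjPlaneAux

open Matrix Module Finset

variable {P : Type} [Fintype P] [DecidableEq P]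

/-- indicator of a line -/
def ind (p : ℕ) (ℓ : Finset P) : P → ZMod p := fun x => if x ∈ ℓ then 1 else 0

lemma sum_ind (p : ℕ) (ℓ m : Finset P) : ∑ x ∈ ℓ, ind p m x = ((ℓ ∩ m).card : ZMod p) := by
  rw [Finset.inter_comm]
  simp [ind, Finset.sum_ite_mem, Finset.inter_comm]

lemma sum_univ_ind (p : ℕ) (m : Finset P) : ∑ x : P, ind p m x = (m.card : ZMod p) := by
  simp [ind, Finset.sum_ite_mem]

lemma inter_card_one {L : Finset (Finset P)}
    (h5 : ∀ ℓ₁ ∈ L, ∀ ℓ₂ ∈ L, ℓ₁ ≠ ℓ₂ → ∃! x : P, x ∈ ℓ₁ ∧ x ∈ ℓ₂)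
    {ℓ m : Finset P} (hℓ : ℓ ∈ L) (hm : m ∈ L) (hne : ℓ ≠ m) : (ℓ ∩ m).card = 1 := by
  obtain ⟨x, hx, hxu⟩ := h5 ℓ hℓ m hm hne
  rw [Finset.card_eq_one]
  refine ⟨x, ?_⟩
  ext y
  simp only [Finset.mem_inter, Finset.mem_singleton]
  constructor
  · intro h; exact hxu y h
  · rintro rfl; exact hx

lemma card_L {p : ℕ} (hp : 0 < p) {L : Finset (Finset P)}
    (h1 : Fintype.card P = p ^ 2 + p + 1) (h2 : ∀ ℓ ∈ L, ℓ.card = p + 1)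
    (h3 : ∀ x : P, (L.filter (fun ℓ => x ∈ ℓ)).card = p + 1) :
    L.card = p ^ 2 + p + 1 := by
  have key : L.card * (p + 1) = (p ^ 2 + p + 1) * (p + 1) := by
    calc L.card * (p + 1) = ∑ ℓ ∈ L, ℓ.card := by
          rw [Finset.sum_congr rfl h2, Finset.sum_const, smul_eq_mul]
      _ = ∑ ℓ ∈ L, ∑ x : P, (if x ∈ ℓ then 1 else 0) := by
          refine Finset.sum_congr rfl fun ℓ _ => ?_
          simp [Finset.sum_ite_mem]
      _ = ∑ x : P, ∑ ℓ ∈ L, (if x ∈ ℓ then 1 else 0) := Finset.sum_comm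
      _ = ∑ x : P, (L.filter (fun ℓ => x ∈ ℓ)).card := by
          refine Finset.sum_congr rfl fun x _ => ?_
          rw [Finset.card_filter]
      _ = (p ^ 2 + p + 1) * (p + 1) := by
          rw [Finset.sum_congr rfl fun x _ => h3 x, Finset.sum_const, smul_eq_mul,
            Finset.card_univ, h1]
  exact Nat.eq_of_mul_eq_mul_right (by omega) key

end ProjPlaneAux

set_option maxHeartbeats 1000000 in
/-- Lemma 3.1: a word `w ∈ F_p^P` lies in the `p`-ary code of a projective plane `π` of
prime order `p` if and only if `⟨w, ℓ⟩ = ⟨w, 1⟩` for every line `ℓ` of `π`. -/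
theorem mem_code_iff_inner_const (p : ℕ) (hp : p.Prime) {P : Type} [Fintype P]
    [DecidableEq P] (L : Finset (Finset P)) (hπ : IsProjPlane p L) (w : P → ZMod p) :
    w ∈ Submodule.span (ZMod p)
        {v : P → ZMod p | ∃ ℓ ∈ L, v = fun x => if x ∈ ℓ then (1 : ZMod p) else 0} ↔
      ∀ ℓ ∈ L, ∑ x ∈ ℓ, w x = ∑ x : P, w x := by
  classical
  haveI : Fact p.Prime := ⟨hp⟩
  open ProjPlaneAux Matrix Module in
  obtain ⟨hcardP, hlinecard, hpencil, htwo, hmeet⟩ := hπ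
  have hset : {v : P → ZMod p | ∃ ℓ ∈ L, v = fun x => if x ∈ ℓ then (1 : ZMod p) else 0}
      = {v : P → ZMod p | ∃ ℓ ∈ L, v = ProjPlaneAux.ind p ℓ} := rfl
  rw [hset]
  set n := p ^ 2 + p + 1 with hn
  set C := Submodule.span (ZMod p) {v : P → (ZMod p) | ∃ ℓ ∈ L, v = ProjPlaneAux.ind p ℓ} with hC
  have hpF : (p : (ZMod p)) = 0 := ZMod.natCast_self p
  have hline1 : ∀ ℓ ∈ L, ((ℓ.card : (ZMod p))) = 1 := by
    intro ℓ h; rw [hlinecard ℓ h]; push_cast [hpF]; ring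
  have hmeet1 : ∀ ℓ ∈ L, ∀ m ∈ L, (((ℓ ∩ m).card : (ZMod p))) = 1 := by
    intro ℓ hℓ m hm
    by_cases h : ℓ = m
    · subst h; rw [Finset.inter_self]; exact hline1 ℓ hℓ
    · rw [ProjPlaneAux.inter_card_one hmeet hℓ hm h]; exact Nat.cast_one
  constructor
  · -- easy direction
    intro hw ℓ hℓ
    induction hw using Submodule.span_induction with
    | mem v hv =>
        obtain ⟨m, hm, rfl⟩ := hv
        rw [ProjPlaneAux.sum_ind, ProjPlaneAux.sum_univ_ind, hmeet1 ℓ hℓ m hm, hline1 m hm]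
    | zero => simp
    | add u v _ _ hu hv => simp [Finset.sum_add_distrib, hu, hv]
    | smul a u _ hu => simp only [Pi.smul_apply, smul_eq_mul, ← Finset.mul_sum]; rw [hu]
  · intro H
    have hcardL : L.card = n := ProjPlaneAux.card_L hp.pos hcardP hlinecard hpencil
    have hcard_eq : Fintype.card P = Fintype.card {ℓ // ℓ ∈ L} := by
      rw [Fintype.card_coe, hcardL, hcardP]
    let eL : P ≃ {ℓ // ℓ ∈ L} := Fintype.equivOfCardEq hcard_eq
    set M : Matrix P P ℤ := Matrix.of fun x y => if y ∈ (eL x : Finset P) then 1 else 0 with hM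
    set A : Matrix P P (ZMod p) := M.map (Int.cast : ℤ → ZMod p) with hAdef
    have hA : ∀ x y, A x y = if y ∈ (eL x : Finset P) then 1 else 0 := by
      intro x y
      simp [hAdef, hM, Matrix.map_apply, apply_ite (Int.cast : ℤ → ZMod p)]
    have hArow : ∀ x, A x = ProjPlaneAux.ind p (eL x : Finset P) := by
      intro x; funext y; rw [hA]; rfl
    set K := LinearMap.ker A.mulVecLin with hK
    set k := finrank (ZMod p) K with hk
    set r := finrank (ZMod p) C with hr
    -- rank and nullity
    have hrange : Set.range A = {v : P → ZMod p | ∃ ℓ ∈ L, v = ProjPlaneAux.ind p ℓ} := by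
      ext v
      constructor
      · rintro ⟨x, rfl⟩
        exact ⟨(eL x : Finset P), (eL x).2, (hArow x)⟩
      · rintro ⟨ℓ, hℓ, rfl⟩
        refine ⟨eL.symm ⟨ℓ, hℓ⟩, ?_⟩
        rw [hArow, Equiv.apply_symm_apply]
    have hrank : A.rank = r := by
      rw [Matrix.rank_eq_finrank_span_row, hr, hC, ← hrange]; rfl
    have hrk : r + k = n := by
      have h0 := LinearMap.finrank_range_add_finrank_ker A.mulVecLin
      rw [Module.finrank_fintype_fun_eq_card, hcardP] at h0
      rw [← hrank, hk, hK]
      exact h0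
    -- determinant
    have hMMT : M * Mᵀ = (p : ℤ) • (1 : Matrix P P ℤ) + Matrix.of (fun _ _ => (1 : ℤ)) := by
      ext x y
      have hsum : ∀ a b : Finset P, ∑ z : P, (if z ∈ a then (1 : ℤ) else 0) *
          (if z ∈ b then (1 : ℤ) else 0) = ((a ∩ b).card : ℤ) := by
        intro a b
        have h1 : ∀ z : P, (if z ∈ a then (1 : ℤ) else 0) * (if z ∈ b then (1 : ℤ) else 0)
            = if z ∈ a ∩ b then (1 : ℤ) else 0 := by
          intro z
          simp only [Finset.mem_inter]
          split_ifs with h1 h2 h3 <;> simp_all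
        rw [Finset.sum_congr rfl fun z _ => h1 z, Finset.sum_ite_mem, Finset.univ_inter]
        simp
      simp only [Matrix.mul_apply, Matrix.transpose_apply, hM, Matrix.of_apply,
        Matrix.add_apply, Matrix.smul_apply, Matrix.one_apply, smul_eq_mul]
      rw [hsum]
      by_cases hxy : x = y
      · subst hxy
        rw [Finset.inter_self]
        rw [hlinecard _ (eL x).2]
        simp
      · have hne : (eL x : Finset P) ≠ (eL y : Finset P) := by
          intro hcon
          exact hxy (eL.injective (Subtype.ext hcon))
        rw [ProjPlaneAux.inter_card_one hmeet (eL x).2 (eL y).2 hne]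
        simp [hxy]
    have hdet2 : M.det ^ 2 = (p : ℤ) ^ (n - 1) * ((p : ℤ) + 1) ^ 2 := by
      have hsq : M.det ^ 2 = (M * Mᵀ).det := by
        rw [Matrix.det_mul, Matrix.det_transpose, sq]
      have hpQ : (p : ℚ) ≠ 0 := Nat.cast_ne_zero.mpr hp.pos.ne'
      have hcast : ((M.det ^ 2 : ℤ) : ℚ)
          = (((p : ℤ) ^ (n - 1) * ((p : ℤ) + 1) ^ 2 : ℤ) : ℚ) := by
        rw [hsq, hMMT]
        have hdm : ((((p : ℤ) • (1 : Matrix P P ℤ) + Matrix.of fun _ _ => (1 : ℤ)).det : ℤ) : ℚ)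
            = (((p : ℤ) • (1 : Matrix P P ℤ) + Matrix.of fun _ _ => (1 : ℤ)).map
              (Int.castRingHom ℚ)).det :=
          RingHom.map_det (Int.castRingHom ℚ)
            ((p : ℤ) • (1 : Matrix P P ℤ) + Matrix.of fun _ _ => 1)
        rw [hdm]
        have hmap : (((p : ℤ) • (1 : Matrix P P ℤ) + Matrix.of fun _ _ => (1 : ℤ)).map
              (Int.castRingHom ℚ))
            = (p : ℚ) • (1 + Matrix.replicateCol Unit (fun _ => (p : ℚ)⁻¹)
                * Matrix.replicateRow Unit (fun _ : P => (1 : ℚ))) := by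
          ext x y
          simp only [Matrix.map_apply, Matrix.add_apply, Matrix.smul_apply, Matrix.of_apply,
            Matrix.mul_apply, Matrix.replicateCol_apply, Matrix.replicateRow_apply, Finset.univ_unique,
            Finset.sum_singleton, smul_eq_mul, Matrix.one_apply]
          push_cast
          by_cases hxy : x = y
          · subst hxy; simp; try field_simp
          · simp [hxy]; try field_simp
        rw [hmap, Matrix.det_smul, Matrix.det_one_add_replicateCol_mul_replicateRow]
        have hdot : (fun _ : P => (1 : ℚ)) ⬝ᵥ (fun _ : P => (p : ℚ)⁻¹)
            = (n : ℚ) * (p : ℚ)⁻¹ := by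
          simp [dotProduct, hcardP, mul_comm]
        rw [hdot, hcardP]
        have hpow : (p : ℚ) ^ n = (p : ℚ) ^ (n - 1) * p := by
          rw [← pow_succ]
          try congr 1
          try omega
        rw [hpow]
        push_cast [hn]
        field_simp
        ring
      exact_mod_cast hcast
    have hpk : (p : ℤ) ^ k ∣ M.det := by
      obtain ⟨q, hq⟩ := Submodule.exists_isCompl K
      set m' := finrank (ZMod p) q with hm'
      set eiso := Submodule.prodEquivOfIsCompl K q hq with heiso
      set bK := finBasis (ZMod p) K with hbK
      set bq := finBasis (ZMod p) q with hbq
      set b : Module.Basis (Fin k ⊕ Fin m') (ZMod p) (P → ZMod p) := (bK.prod bq).map eiso with hb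
      have hbinl : ∀ i, b (Sum.inl i) ∈ K := by
        intro i
        have hbi : b (Sum.inl i) = (bK i : P → ZMod p) := by
          simp [hb, heiso, Module.Basis.prod_apply, Submodule.coe_prodEquivOfIsCompl]
        rw [hbi]; exact (bK i).2
      have hcards : Fintype.card (Fin k ⊕ Fin m') = Fintype.card P := by
        have h0 := Submodule.finrank_add_eq_of_isCompl hq
        rw [Module.finrank_fintype_fun_eq_card] at h0
        simp only [Fintype.card_sum, Fintype.card_fin]
        omega
      set ε : (Fin k ⊕ Fin m') ≃ P := Fintype.equivOfCardEq hcards with hε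
      set b' : Module.Basis P (ZMod p) (P → ZMod p) := b.reindex ε with hb'
      set Vb : Matrix P P (ZMod p) := (Pi.basisFun (ZMod p) P).toMatrix ⇑b' with hVbdef
      have hVb : ∀ x y, Vb x y = b' y x := by
        intro x y; simp [hVbdef, Module.Basis.toMatrix_apply]
      have hVbdet : IsUnit Vb.det := by
        have : Invertible Vb := (Pi.basisFun (ZMod p) P).invertibleToMatrix b'
        exact (Matrix.isUnit_iff_isUnit_det Vb).mp (isUnit_of_invertible Vb)
      set Vz : Matrix P P ℤ := Matrix.of fun x y => ((Vb x y).val : ℤ) with hVz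
      have hVzmap : Vz.map (Int.cast : ℤ → ZMod p) = Vb := by
        ext x y
        simp only [hVz, Matrix.map_apply, Matrix.of_apply]
        push_cast [ZMod.natCast_val]
        simp
      have hAV : (M * Vz).map (Int.cast : ℤ → ZMod p) = A * Vb := by
        rw [hAdef, ← hVzmap]
        exact Matrix.map_mul (f := Int.castRingHom (ZMod p))
      have hcol0 : ∀ y : P, (ε.symm y).isLeft → ∀ x, (A * Vb) x y = 0 := by
        intro y hy x
        obtain ⟨i, hi⟩ := Sum.isLeft_iff.mp hy
        have hker : b' y ∈ K := by
          rw [hb', Module.Basis.reindex_apply, hi]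
          exact hbinl i
        have h0 : A.mulVec (b' y) = 0 := LinearMap.mem_ker.mp hker
        calc (A * Vb) x y = ∑ z, A x z * b' y z := by
              rw [Matrix.mul_apply]
              exact Finset.sum_congr rfl fun z _ => by rw [hVb]
          _ = A.mulVec (b' y) x := rfl
          _ = 0 := by rw [h0]; rfl
      have hdvdcol : ∀ x y, (ε.symm y).isLeft → (p : ℤ) ∣ (M * Vz) x y := by
        intro x y hy
        have h0 : (((M * Vz) x y : ℤ) : ZMod p) = 0 := by
          have h1 := congrFun (congrFun hAV x) y
          rw [Matrix.map_apply] at h1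
          rw [h1]
          exact hcol0 y hy x
        exact (ZMod.intCast_zmod_eq_zero_iff_dvd _ p).mp h0
      set W : Matrix P P ℤ := Matrix.of fun x y =>
        if (ε.symm y).isLeft then (M * Vz) x y / p else (M * Vz) x y with hW
      have hfact : M * Vz = Matrix.of fun x y =>
          (if (ε.symm y).isLeft then (p : ℤ) else 1) * W x y := by
        ext x y
        simp only [hW, Matrix.of_apply]
        by_cases hy : (ε.symm y).isLeft
        · rw [if_pos hy, if_pos hy]
          exact (Int.mul_ediv_cancel' (hdvdcol x y hy)).symm
        · rw [if_neg hy, if_neg hy, one_mul]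
      have hprod : (∏ y : P, if (ε.symm y).isLeft then (p : ℤ) else 1) = (p : ℤ) ^ k := by
        rw [← Equiv.prod_comp ε (fun y => if (ε.symm y).isLeft then (p : ℤ) else 1)]
        simp [Fintype.prod_sum_type]
      have hdetfact : M.det * Vz.det = (p : ℤ) ^ k * W.det := by
        rw [← Matrix.det_mul, hfact, Matrix.det_mul_row, hprod]
      have hVznd : ¬ (p : ℤ) ∣ Vz.det := by
        intro hdvd
        have h0 : ((Vz.det : ℤ) : ZMod p) = 0 := (ZMod.intCast_zmod_eq_zero_iff_dvd _ p).mpr hdvd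
        rw [show ((Vz.det : ℤ) : ZMod p) = (Vz.map (Int.cast : ℤ → ZMod p)).det from
          RingHom.map_det (Int.castRingHom (ZMod p)) Vz, hVzmap] at h0
        exact hVbdet.ne_zero h0
      have hco : IsCoprime ((p : ℤ) ^ k) Vz.det :=
        IsCoprime.pow_left (((Nat.prime_iff_prime_int.mp hp).coprime_iff_not_dvd).mpr hVznd)
      exact hco.dvd_of_dvd_mul_right ⟨W.det, hdetfact⟩
    have h2k : 2 * k ≤ n - 1 := by
      by_contra hcon
      push_neg at hcon
      have hpz : (p : ℤ) ≠ 0 := Int.natCast_ne_zero.mpr hp.pos.ne'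
      have hprime : Prime (p : ℤ) := Nat.prime_iff_prime_int.mp hp
      have h1 : (p : ℤ) ^ n ∣ M.det ^ 2 := by
        calc (p : ℤ) ^ n ∣ (p : ℤ) ^ (2 * k) := pow_dvd_pow _ (by omega)
          _ = ((p : ℤ) ^ k) ^ 2 := by rw [← pow_mul, mul_comm]
          _ ∣ M.det ^ 2 := pow_dvd_pow_of_dvd hpk 2
      rw [hdet2] at h1
      have hn1 : n = (n - 1) + 1 := by omega
      rw [hn1, pow_succ] at h1
      have h2 : (p : ℤ) ∣ ((p : ℤ) + 1) ^ 2 :=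
        (mul_dvd_mul_iff_left (pow_ne_zero _ hpz)).mp h1
      have h3 : (p : ℤ) ∣ (p : ℤ) + 1 := hprime.dvd_of_dvd_pow h2
      have h4 : (p : ℤ) ∣ 1 := (dvd_add_right dvd_rfl).mp h3
      exact hprime.not_unit (isUnit_of_dvd_one h4)
    -- kernel membership
    have hmulVec : ∀ (u : P → ZMod p) (x : P), A.mulVec u x = ∑ y ∈ (eL x : Finset P), u y := by
      intro u x
      simp only [Matrix.mulVec, dotProduct, hA, ite_mul, one_mul, zero_mul]
      rw [Finset.sum_ite_mem, Finset.univ_inter]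
    have hmemK : ∀ u : P → ZMod p, u ∈ K ↔ ∀ ℓ ∈ L, ∑ x ∈ ℓ, u x = 0 := by
      intro u
      rw [hK, LinearMap.mem_ker]
      constructor
      · intro hu ℓ hℓ
        have h0 := congrFun hu (eL.symm ⟨ℓ, hℓ⟩)
        rwa [Matrix.mulVecLin_apply, hmulVec, Equiv.apply_symm_apply] at h0
      · intro h
        funext x
        rw [Matrix.mulVecLin_apply, hmulVec]
        exact h _ (eL x).2
    -- the difference span
    set E := Submodule.span (ZMod p)
      {d : P → ZMod p | ∃ ℓ ∈ L, ∃ m ∈ L, d = ProjPlaneAux.ind p ℓ - ProjPlaneAux.ind p m}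
      with hE
    have hE_le_K : E ≤ K := by
      rw [hE, Submodule.span_le]
      rintro d ⟨ℓ, hℓ, m, hm, rfl⟩
      rw [SetLike.mem_coe, hmemK]
      intro t ht
      simp only [Pi.sub_apply, Finset.sum_sub_distrib, ProjPlaneAux.sum_ind,
        hmeet1 t ht ℓ hℓ, hmeet1 t ht m hm, sub_self]
    have hE_le_C : E ≤ C := by
      rw [hE, Submodule.span_le]
      rintro d ⟨ℓ, hℓ, m, hm, rfl⟩
      exact sub_mem (Submodule.subset_span ⟨ℓ, hℓ, rfl⟩) (Submodule.subset_span ⟨m, hm, rfl⟩)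
    obtain ⟨ℓ₀, hℓ₀⟩ : L.Nonempty := by
      rw [← Finset.card_pos, hcardL]; positivity
    have hr_le : r ≤ finrank (ZMod p) E + 1 := by
      set S := Submodule.span (ZMod p) {ProjPlaneAux.ind p ℓ₀} with hS
      have hsup : C ≤ E ⊔ S := by
        rw [hC, Submodule.span_le]
        rintro v ⟨ℓ, hℓ, rfl⟩
        have h1 : ProjPlaneAux.ind p ℓ = (ProjPlaneAux.ind p ℓ - ProjPlaneAux.ind p ℓ₀)
            + ProjPlaneAux.ind p ℓ₀ := by ring
        rw [SetLike.mem_coe, h1]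
        exact add_mem
          (Submodule.mem_sup_left (Submodule.subset_span ⟨ℓ, hℓ, ℓ₀, hℓ₀, rfl⟩))
          (Submodule.mem_sup_right (Submodule.subset_span rfl))
      have hS1 : finrank (ZMod p) S = 1 := by
        apply finrank_span_singleton
        obtain ⟨x, hx⟩ : ℓ₀.Nonempty := by
          rw [← Finset.card_pos, hlinecard _ hℓ₀]; omega
        intro hcon
        have := congrFun hcon x
        simp only [ProjPlaneAux.ind, hx, if_true, Pi.zero_apply] at this
        exact one_ne_zero this
      have h2 := Submodule.finrank_sup_add_finrank_inf_eq E S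
      have h3 : r ≤ finrank (ZMod p) ↥(E ⊔ S) := Submodule.finrank_mono hsup
      omega
    have hK_le_E : finrank (ZMod p) K ≤ finrank (ZMod p) E := by omega
    have hKE : E = K := Submodule.eq_of_le_of_finrank_le hE_le_K hK_le_E
    have hK_le_C : K ≤ C := hKE ▸ hE_le_C
    -- the all-ones vector
    have h1C : (fun _ : P => (1 : ZMod p)) ∈ C := by
      have hsum : (fun _ : P => (1 : ZMod p)) = ∑ ℓ ∈ L, ProjPlaneAux.ind p ℓ := by
        funext x
        rw [Finset.sum_apply]
        have : ∑ ℓ ∈ L, ProjPlaneAux.ind p ℓ x = ((L.filter (fun ℓ => x ∈ ℓ)).card : ZMod p) := by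
          rw [Finset.card_filter]
          push_cast
          rfl
        rw [this, hpencil x]
        push_cast [hpF]; ring
      rw [hsum]
      exact Submodule.sum_mem _ fun ℓ hℓ => Submodule.subset_span ⟨ℓ, hℓ, rfl⟩
    -- conclude
    have hfin : w = (w - (∑ x : P, w x) • (fun _ : P => (1 : ZMod p)))
        + (∑ x : P, w x) • (fun _ : P => (1 : ZMod p)) := by
      funext x; simp
    have hwK : w - (∑ x : P, w x) • (fun _ : P => (1 : ZMod p)) ∈ K := by
      rw [hmemK]
      intro ℓ hℓ
      simp only [Pi.sub_apply, Pi.smul_apply, smul_eq_mul, mul_one, Finset.sum_sub_distrib,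
        Finset.sum_const, H ℓ hℓ, nsmul_eq_mul]
      rw [hline1 ℓ hℓ]
      ring
    rw [hfin]
    exact add_mem (hK_le_C hwK) (Submodule.smul_mem _ _ h1C)
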